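/- Let H be a vertex-minimal finite simple graph with θ(H) ≤ 7 and χ'_s(H) > 13. Then every vertex of degree 2 in H is adjacent to two vertices of degree 4. -/

import Mathlib

open SimpleGraph

variable {V : Type*}

/-- Two edges are at distance at most 2 (they "see" each other): distinct and
some endpoint of one equals or is adjacent to some endpoint of the other. -/
def EdgeSees (G : SimpleGraph V) (e e' : Sym2 V) : Prop :=
  e ≠ e' ∧ ∃ a ∈ e, ∃ b ∈ e', a = b ∨ G.Adj a b

/-- `G` admits a strong `N`-edge-coloring. -/
def HasStrongColoring (G : SimpleGraph V) (N : ℕ) : Prop :=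
  ∃ f : G.edgeSet → Fin N, ∀ e e' : G.edgeSet, EdgeSees G e.val e'.val → f e ≠ f e'

/-- `G − v`: delete the vertex `v` (remove all edges incident to it). -/
def DelV (G : SimpleGraph V) (v : V) : SimpleGraph V where
  Adj a b := G.Adj a b ∧ a ≠ v ∧ b ≠ v
  symm := ⟨fun _ _ h => ⟨h.1.symm, h.2.2, h.2.1⟩⟩
  loopless := ⟨fun a h => G.loopless.irrefl a h.1⟩

lemma edgeSees_symm {G : SimpleGraph V} {e e' : Sym2 V} (h : EdgeSees G e e') :
    EdgeSees G e' e := by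
  obtain ⟨hne, a, ha, b, hb, hab⟩ := h
  exact ⟨hne.symm, b, hb, a, ha, by rcases hab with h | h; exact Or.inl h.symm; exact Or.inr h.symm⟩

lemma mem_delV_edgeSet {G : SimpleGraph V} {v : V} {e : Sym2 V} :
    e ∈ (DelV G v).edgeSet ↔ e ∈ G.edgeSet ∧ v ∉ e := by
  induction e using Sym2.ind with
  | _ a b =>
    simp only [mem_edgeSet, Sym2.mem_iff, DelV]
    constructor
    · rintro ⟨h, ha, hb⟩
      exact ⟨h, by rintro (rfl | rfl) <;> simp_all⟩
    · rintro ⟨h, hv⟩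
      push_neg at hv
      exact ⟨h, Ne.symm hv.1, Ne.symm hv.2⟩

lemma edgeSees_delV {G : SimpleGraph V} {v : V} {e e' : Sym2 V}
    (he : e ∈ (DelV G v).edgeSet) (he' : e' ∈ (DelV G v).edgeSet)
    (h : EdgeSees G e e') : EdgeSees (DelV G v) e e' := by
  obtain ⟨hne, a, ha, b, hb, hab⟩ := h
  refine ⟨hne, a, ha, b, hb, ?_⟩
  rcases hab with h | h
  · exact Or.inl h
  · refine Or.inr ⟨h, ?_, ?_⟩
    · rintro rfl; exact ((mem_delV_edgeSet.mp he).2 ha)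
    · rintro rfl; exact ((mem_delV_edgeSet.mp he').2 hb)

/-- In a minimal counterexample with θ ≤ 7, χ'ₛ > 13, every 2-vertex is
adjacent to two 4-vertices. -/
theorem stmt5 [Fintype V] (H : SimpleGraph V) [DecidableRel H.Adj]
    (hore : ∀ u w, H.Adj u w → H.degree u + H.degree w ≤ 7)
    (hnc : ¬ HasStrongColoring H 13)
    (hmin : ∀ v, HasStrongColoring (DelV H v) 13) :
    ∀ v, H.degree v = 2 → ∀ u, H.Adj v u → H.degree u = 4 := by
  intro v hdeg2 u hvu
  by_contra hne4
  classical
  have huv : u ≠ v := (hvu.ne).symm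
  have hu_mem : u ∈ H.neighborFinset v := by
    rw [mem_neighborFinset]; exact hvu
  obtain ⟨a, b, hab, hNab⟩ := Finset.card_eq_two.mp (hdeg2 ▸ rfl : (H.neighborFinset v).card = 2)
  obtain ⟨w, huw, hN⟩ : ∃ w, u ≠ w ∧ H.neighborFinset v = {u, w} := by
    rw [hNab] at hu_mem
    rcases Finset.mem_insert.mp hu_mem with rfl | hb
    · exact ⟨b, hab, hNab⟩
    · rcases Finset.mem_singleton.mp hb with rfl
      exact ⟨a, hab.symm, by rw [hNab, Finset.pair_comm]⟩
  have hvw : H.Adj v w := by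
    rw [← mem_neighborFinset, hN]; simp
  have hwv : w ≠ v := (hvw.ne).symm
  have hadjv : ∀ x, H.Adj v x ↔ (x = u ∨ x = w) := by
    intro x
    rw [← mem_neighborFinset, hN]; simp
  -- the deleted graph and its coloring
  set H' := DelV H v with hH'
  obtain ⟨f0, hf0⟩ := hmin v
  set g : Sym2 V → Fin 13 := fun e => if h : e ∈ H'.edgeSet then f0 ⟨e, h⟩ else 0 with hgdef
  have hg : ∀ e ∈ H'.edgeSet, ∀ e' ∈ H'.edgeSet, EdgeSees H e e' → g e ≠ g e' := by
    intro e he e' he' hsee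
    have := hf0 ⟨e, he⟩ ⟨e', he'⟩ (edgeSees_delV he he' hsee)
    simpa [hgdef, he, he'] using this
  -- edges of H through v
  have hHv : ∀ e ∈ H.edgeSet, v ∈ e → e = s(v,u) ∨ e = s(v,w) := by
    intro e
    induction e using Sym2.ind with
    | _ a b =>
      intro he hv
      rcases Sym2.mem_iff.mp hv with rfl | rfl
      · rcases (hadjv b).mp (H.mem_edgeSet.mp he) with rfl | rfl
        · exact Or.inl rfl
        · exact Or.inr rfl
      · rcases (hadjv a).mp (H.mem_edgeSet.mp he).symm with rfl | rfl
        · exact Or.inl (Sym2.eq_swap)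
        · exact Or.inr (Sym2.eq_swap)
  have hsvu : s(v,u) ∈ H.edgeSet := H.mem_edgeSet.mpr hvu
  have hsvw : s(v,w) ∈ H.edgeSet := H.mem_edgeSet.mpr hvw
  have hsvusvw : s(v,u) ≠ s(v,w) := by
    intro h
    rcases Sym2.eq_iff.mp h with ⟨-, h2⟩ | ⟨h1, -⟩
    · exact huw h2
    · exact hwv h1.symm
  have hold : ∀ e ∈ H.edgeSet, e ≠ s(v,u) → e ≠ s(v,w) → e ∈ H'.edgeSet := by
    intro e he h1 h2
    rw [hH', mem_delV_edgeSet]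
    refine ⟨he, fun hv => ?_⟩
    rcases hHv e he hv with rfl | rfl
    · exact h1 rfl
    · exact h2 rfl
  have holdmem : ∀ e ∈ H'.edgeSet, e ∈ H.edgeSet ∧ v ∉ e := by
    intro e he; exact mem_delV_edgeSet.mp he
  -- master extension lemma
  have hextend : ∀ g' : Sym2 V → Fin 13,
      (∀ e ∈ H'.edgeSet, ∀ e' ∈ H'.edgeSet, EdgeSees H e e' → g' e ≠ g' e') →
      ∀ c1 c2 : Fin 13, c1 ≠ c2 →
      (∀ e ∈ H'.edgeSet, EdgeSees H s(v,u) e → g' e ≠ c1) →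
      (∀ e ∈ H'.edgeSet, EdgeSees H s(v,w) e → g' e ≠ c2) → False := by
    intro g' hgood c1 c2 hc12 hc1 hc2
    apply hnc
    refine ⟨fun e => if e.val = s(v,u) then c1 else if e.val = s(v,w) then c2 else g' e.val, ?_⟩
    rintro ⟨e, he⟩ ⟨e', he'⟩ hsee
    simp only
    by_cases h1 : e = s(v,u)
    · rw [if_pos h1]
      by_cases h2 : e' = s(v,u)
      · exact absurd (h1.trans h2.symm) hsee.1
      · rw [if_neg h2]
        by_cases h3 : e' = s(v,w)
        · rw [if_pos h3]; exact hc12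
        · rw [if_neg h3]
          exact (hc1 e' (hold e' he' h2 h3) (h1 ▸ hsee)).symm
    · rw [if_neg h1]
      by_cases h2 : e = s(v,w)
      · rw [if_pos h2]
        by_cases h3 : e' = s(v,u)
        · rw [if_pos h3]; exact hc12.symm
        · rw [if_neg h3]
          by_cases h4 : e' = s(v,w)
          · exact absurd (h2.trans h4.symm) hsee.1
          · rw [if_neg h4]
            exact (hc2 e' (hold e' he' h3 h4) (h2 ▸ hsee)).symm
      · rw [if_neg h2]
        have heold := hold e he h1 h2
        by_cases h3 : e' = s(v,u)
        · rw [if_pos h3]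
          exact hc1 e heold (edgeSees_symm (h3 ▸ hsee))
        · rw [if_neg h3]
          by_cases h4 : e' = s(v,w)
          · rw [if_pos h4]
            exact hc2 e heold (edgeSees_symm (h4 ▸ hsee))
          · rw [if_neg h4]
            exact hgood e heold e' (hold e' he' h3 h4) hsee
  -- Finset machinery
  set SF : Sym2 V → Finset (Sym2 V) :=
    fun t => Finset.univ.filter (fun e => e ∈ H'.edgeSet ∧ EdgeSees H t e) with hSFdef
  set Inc : V → Finset (Sym2 V) :=
    fun a => Finset.univ.filter (fun e => e ∈ H'.edgeSet ∧ a ∈ e) with hIncdef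
  have hSFmem : ∀ t e, e ∈ SF t ↔ e ∈ H'.edgeSet ∧ EdgeSees H t e := by
    intro t e; simp [hSFdef]
  have hIncmem : ∀ a e, e ∈ Inc a ↔ e ∈ H'.edgeSet ∧ a ∈ e := by
    intro a e; simp [hIncdef]
  have hIncv : Inc v = ∅ := by
    rw [Finset.eq_empty_iff_forall_notMem]
    intro e he
    rcases (hIncmem v e).mp he with ⟨h1, h2⟩
    exact (holdmem e h1).2 h2
  have hIncsub : ∀ a, Inc a ⊆ ((H.neighborFinset a).erase v).image (fun x => s(a,x)) := by
    intro a e he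
    rcases (hIncmem a e).mp he with ⟨h1, h2⟩
    obtain ⟨heH, hv⟩ := holdmem e h1
    induction e using Sym2.ind with
    | _ p q =>
      have hadj : H.Adj p q := H.mem_edgeSet.mp heH
      simp only [Sym2.mem_iff] at h2 hv
      push_neg at hv
      rcases h2 with rfl | rfl
      · refine Finset.mem_image.mpr ⟨q, ?_, rfl⟩
        exact Finset.mem_erase.mpr ⟨Ne.symm hv.2, (mem_neighborFinset H a q).mpr hadj⟩
      · refine Finset.mem_image.mpr ⟨p, ?_, Sym2.eq_swap⟩
        exact Finset.mem_erase.mpr ⟨Ne.symm hv.1, (mem_neighborFinset H a p).mpr hadj.symm⟩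
  have hIncB : ∀ a, (Inc a).card ≤ H.degree a := by
    intro a
    calc (Inc a).card ≤ (((H.neighborFinset a).erase v).image (fun x => s(a,x))).card :=
          Finset.card_le_card (hIncsub a)
      _ ≤ ((H.neighborFinset a).erase v).card := Finset.card_image_le
      _ ≤ (H.neighborFinset a).card := Finset.card_le_card (Finset.erase_subset _ _)
      _ = H.degree a := rfl
  have hIncA : ∀ a, H.Adj v a → (Inc a).card ≤ H.degree a - 1 := by
    intro a ha
    calc (Inc a).card ≤ (((H.neighborFinset a).erase v).image (fun x => s(a,x))).card :=
          Finset.card_le_card (hIncsub a)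
      _ ≤ ((H.neighborFinset a).erase v).card := Finset.card_image_le
      _ = (H.neighborFinset a).card - 1 :=
          Finset.card_erase_of_mem ((mem_neighborFinset H a v).mpr ha.symm)
      _ = H.degree a - 1 := rfl
  have hmemInc : ∀ a b, H.Adj a b → a ≠ v → b ≠ v → s(a,b) ∈ Inc a ∧ s(a,b) ∈ Inc b := by
    intro a b hab hav hbv
    have hmem : s(a,b) ∈ H'.edgeSet := by
      rw [hH', mem_delV_edgeSet]
      refine ⟨H.mem_edgeSet.mpr hab, ?_⟩
      simp only [Sym2.mem_iff]
      rintro (rfl | rfl)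
      · exact hav rfl
      · exact hbv rfl
    constructor
    · exact (hIncmem a _).mpr ⟨hmem, by simp⟩
    · exact (hIncmem b _).mpr ⟨hmem, by simp⟩
  have hdiff : ∀ a b, H.Adj a b → a ≠ v → b ≠ v → (Inc a \ Inc b).card ≤ H.degree a - 1 := by
    intro a b hab hav hbv
    obtain ⟨h1, h2⟩ := hmemInc a b hab hav hbv
    have hsub2 : Inc a \ Inc b ⊆ (Inc a).erase s(a,b) := by
      intro e he
      rcases Finset.mem_sdiff.mp he with ⟨he1, he2⟩
      refine Finset.mem_erase.mpr ⟨?_, he1⟩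
      rintro rfl; exact he2 h2
    calc (Inc a \ Inc b).card ≤ ((Inc a).erase s(a,b)).card := Finset.card_le_card hsub2
      _ = (Inc a).card - 1 := Finset.card_erase_of_mem h1
      _ ≤ H.degree a - 1 := Nat.sub_le_sub_right (hIncB a) 1
  -- the master subset lemma for edges seeing a given edge
  have hsub : ∀ a b, H.Adj a b → SF s(a,b) ⊆
      ((Inc a).erase s(a,b)) ∪ ((Inc b).erase s(a,b))
      ∪ ((H.neighborFinset a).erase b).biUnion (fun x => Inc x \ Inc a)
      ∪ ((H.neighborFinset b).erase a).biUnion (fun x => Inc x \ Inc b) := by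
    intro a b hab e he
    rcases (hSFmem _ e).mp he with ⟨heH', hne, p, hp, q, hq, hpq⟩
    have hene : e ≠ s(a,b) := hne.symm
    have hIncq : q ∈ e → e ∈ Inc q := fun h => (hIncmem q e).mpr ⟨heH', h⟩
    simp only [Finset.mem_union]
    rcases Sym2.mem_iff.mp hp with rfl | rfl
    · -- p = a
      rcases hpq with rfl | hadj
      · exact Or.inl (Or.inl (Or.inl (Finset.mem_erase.mpr ⟨hene, hIncq hq⟩)))
      · by_cases hqb : q = b
        · subst hqb
          exact Or.inl (Or.inl (Or.inr (Finset.mem_erase.mpr ⟨hene, hIncq hq⟩)))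
        · by_cases hqa : e ∈ Inc p
          · exact Or.inl (Or.inl (Or.inl (Finset.mem_erase.mpr ⟨hene, hqa⟩)))
          · refine Or.inl (Or.inr (Finset.mem_biUnion.mpr ⟨q, ?_, ?_⟩))
            · exact Finset.mem_erase.mpr ⟨hqb, (mem_neighborFinset H p q).mpr hadj⟩
            · exact Finset.mem_sdiff.mpr ⟨hIncq hq, hqa⟩
    · -- p = b
      rcases hpq with rfl | hadj
      · exact Or.inl (Or.inl (Or.inr (Finset.mem_erase.mpr ⟨hene, hIncq hq⟩)))
      · by_cases hqa : q = a
        · subst hqa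
          exact Or.inl (Or.inl (Or.inl (Finset.mem_erase.mpr ⟨hene, hIncq hq⟩)))
        · by_cases hqb : e ∈ Inc p
          · exact Or.inl (Or.inl (Or.inr (Finset.mem_erase.mpr ⟨hene, hqb⟩)))
          · refine Or.inr (Finset.mem_biUnion.mpr ⟨q, ?_, ?_⟩)
            · exact Finset.mem_erase.mpr ⟨hqa, (mem_neighborFinset H p q).mpr hadj⟩
            · exact Finset.mem_sdiff.mpr ⟨hIncq hq, hqb⟩
  have hcard4 : ∀ a b, H.Adj a b → (SF s(a,b)).card ≤
      ((Inc a).erase s(a,b)).card + ((Inc b).erase s(a,b)).card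
      + (∑ x ∈ (H.neighborFinset a).erase b, (Inc x \ Inc a).card)
      + (∑ x ∈ (H.neighborFinset b).erase a, (Inc x \ Inc b).card) := by
    intro a b hab
    calc (SF s(a,b)).card ≤ _ := Finset.card_le_card (hsub a b hab)
      _ ≤ _ := by
        refine le_trans (Finset.card_union_le _ _) ?_
        refine add_le_add (le_trans (Finset.card_union_le _ _) ?_) Finset.card_biUnion_le
        exact add_le_add (Finset.card_union_le _ _) Finset.card_biUnion_le
  -- numeric bounds for the two edges at v
  set Du := H.degree u with hDudef
  set Dw := H.degree w with hDwdef
  have hDu5 : Du ≤ 5 := by have := hore v u hvu; rw [hdeg2] at this; omega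
  have hDw5 : Dw ≤ 5 := by have := hore v w hvw; rw [hdeg2] at this; omega
  have hDu1 : 1 ≤ Du :=
    Finset.card_pos.mpr ⟨v, (mem_neighborFinset H u v).mpr hvu.symm⟩
  have hDw1 : 1 ≤ Dw :=
    Finset.card_pos.mpr ⟨v, (mem_neighborFinset H w v).mpr hvw.symm⟩
  have hNvu : (H.neighborFinset v).erase u = {w} := by
    rw [hN]
    exact Finset.erase_insert (by simp [huw])
  have hNvw : (H.neighborFinset v).erase w = {u} := by
    rw [hN, Finset.pair_comm]
    exact Finset.erase_insert (by simp [huw.symm])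
  have hsumN : ∀ z, H.Adj v z → ∑ x ∈ (H.neighborFinset z).erase v, (Inc x \ Inc z).card
      ≤ (H.degree z - 1) * (6 - H.degree z) := by
    intro z hvz
    have hzv : z ≠ v := hvz.ne'
    have hcardN : ((H.neighborFinset z).erase v).card = H.degree z - 1 :=
      Finset.card_erase_of_mem ((mem_neighborFinset H z v).mpr hvz.symm)
    have hbound : ∀ x ∈ (H.neighborFinset z).erase v, (Inc x \ Inc z).card ≤ 6 - H.degree z := by
      intro x hx
      rcases Finset.mem_erase.mp hx with ⟨hxv, hxN⟩
      have hadjzx : H.Adj z x := (mem_neighborFinset H z x).mp hxN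
      have hdx : H.degree x + H.degree z ≤ 7 := by have := hore z x hadjzx; omega
      have hd := hdiff x z hadjzx.symm hxv hzv
      have hd1 : 1 ≤ H.degree z :=
        Finset.card_pos.mpr ⟨v, (mem_neighborFinset H z v).mpr hvz.symm⟩
      omega
    have := Finset.sum_le_card_nsmul _ _ (6 - H.degree z) hbound
    rw [hcardN] at this
    simpa [smul_eq_mul] using this
  have hB1 : (SF s(v,u)).card ≤ (Du - 1) + (Dw - 1) + (Du - 1) * (6 - Du) := by
    refine le_trans (hcard4 v u hvu) ?_
    have t1 : ((Inc v).erase s(v,u)).card = 0 := by rw [hIncv]; simp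
    have t2 : ((Inc u).erase s(v,u)).card ≤ Du - 1 :=
      le_trans (Finset.card_le_card (Finset.erase_subset _ _)) (hIncA u hvu)
    have t3 : ∑ x ∈ (H.neighborFinset v).erase u, (Inc x \ Inc v).card ≤ Dw - 1 := by
      rw [hNvu, Finset.sum_singleton]
      exact le_trans (Finset.card_le_card (Finset.sdiff_subset)) (hIncA w hvw)
    have t4 := hsumN u hvu
    rw [← hDudef] at t4
    omega
  have hB2 : (SF s(v,w)).card ≤ (Dw - 1) + (Du - 1) + (Dw - 1) * (6 - Dw) := by
    refine le_trans (hcard4 v w hvw) ?_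
    have t1 : ((Inc v).erase s(v,w)).card = 0 := by rw [hIncv]; simp
    have t2 : ((Inc w).erase s(v,w)).card ≤ Dw - 1 :=
      le_trans (Finset.card_le_card (Finset.erase_subset _ _)) (hIncA w hvw)
    have t3 : ∑ x ∈ (H.neighborFinset v).erase w, (Inc x \ Inc v).card ≤ Du - 1 := by
      rw [hNvw, Finset.sum_singleton]
      exact le_trans (Finset.card_le_card (Finset.sdiff_subset)) (hIncA u hvu)
    have t4 := hsumN w hvw
    rw [← hDwdef] at t4
    omega
  -- choosing free colors
  have hpick : ∀ T : Finset (Fin 13), T.card < 13 → ∃ c, c ∉ T := by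
    intro T hT
    by_contra hc
    push_neg at hc
    have : (Finset.univ : Finset (Fin 13)) ⊆ T := fun c _ => hc c
    have := Finset.card_le_card this
    simp at this
    omega
  have havoid : ∀ (g' : Sym2 V → Fin 13) t c, c ∉ (SF t).image g' →
      ∀ e ∈ H'.edgeSet, EdgeSees H t e → g' e ≠ c := by
    intro g' t c hc e he hsee heq
    exact hc (Finset.mem_image.mpr ⟨e, (hSFmem t e).mpr ⟨he, hsee⟩, heq⟩)
  have hseq_uv : (SF s(v,u)).card ≤ 12 → (SF s(v,w)).card ≤ 11 → False := by
    intro h1 h2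
    obtain ⟨c1, hc1⟩ := hpick ((SF s(v,u)).image g)
      (lt_of_le_of_lt (le_trans Finset.card_image_le h1) (by norm_num))
    obtain ⟨c2, hc2⟩ := hpick ((SF s(v,w)).image g ∪ {c1}) (by
      have h3 : ((SF s(v,w)).image g).card ≤ 11 := le_trans Finset.card_image_le h2
      have h5 := Finset.card_union_le ((SF s(v,w)).image g) ({c1} : Finset (Fin 13))
      have h4 : ({c1} : Finset (Fin 13)).card = 1 := Finset.card_singleton _
      omega)
    rw [Finset.mem_union] at hc2
    push_neg at hc2
    refine hextend g hg c1 c2 ?_ (havoid g _ c1 hc1) (havoid g _ c2 hc2.1)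
    intro h; exact hc2.2 (by simp [h])
  have hseq_wu : (SF s(v,w)).card ≤ 12 → (SF s(v,u)).card ≤ 11 → False := by
    intro h1 h2
    obtain ⟨c2, hc2⟩ := hpick ((SF s(v,w)).image g)
      (lt_of_le_of_lt (le_trans Finset.card_image_le h1) (by norm_num))
    obtain ⟨c1, hc1⟩ := hpick ((SF s(v,u)).image g ∪ {c2}) (by
      have h3 : ((SF s(v,u)).image g).card ≤ 11 := le_trans Finset.card_image_le h2
      have h5 := Finset.card_union_le ((SF s(v,u)).image g) ({c2} : Finset (Fin 13))
      have h4 : ({c2} : Finset (Fin 13)).card = 1 := Finset.card_singleton _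
      omega)
    rw [Finset.mem_union] at hc1
    push_neg at hc1
    refine hextend g hg c1 c2 ?_ (havoid g _ c1 hc1.1) (havoid g _ c2 hc2)
    intro h; exact hc1.2 (by simp [h])
  -- main case analysis
  by_cases hDu3 : Du ≤ 3
  · -- easy greedy case
    have h1 : (Du - 1) + (Du - 1) * (6 - Du) ≤ 8 := by interval_cases Du <;> norm_num
    have h2 : (Dw - 1) + (Dw - 1) * (6 - Dw) ≤ 9 := by interval_cases Dw <;> norm_num
    exact hseq_uv (by omega) (by omega)
  · have hDu5' : Du = 5 := by omega
    rw [hDu5'] at hB1 hB2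
    norm_num at hB1 hB2
    by_cases hDw3 : Dw ≤ 3
    · have h2 : (Dw - 1) + (Dw - 1) * (6 - Dw) ≤ 8 := by interval_cases Dw <;> norm_num
      exact hseq_wu (by omega) (by omega)
    · -- hard cases : Du = 5, Dw ∈ {4,5}
      have hDw4 : 4 ≤ Dw := by omega
      have hnuw : ¬ H.Adj u w := by
        intro h
        have := hore u w h
        rw [← hDudef, ← hDwdef] at this
        omega
      -- generic counting bound for an edge from a degree-5 neighbor of v
      have hcount11 : ∀ z x, H.Adj v z → H.degree z = 5 → H.Adj z x → x ≠ v → ¬ H.Adj v x →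
          (SF s(z,x)).card ≤ 11 := by
        intro z x hvz hdz hzx hxv hnvx
        have hzv : z ≠ v := hvz.ne'
        have hdx : H.degree x ≤ 2 := by have := hore z x hzx; omega
        have hmem := hmemInc z x hzx hzv hxv
        have t1 : ((Inc z).erase s(z,x)).card ≤ 3 := by
          rw [Finset.card_erase_of_mem hmem.1]
          have h5 := hIncA z hvz
          omega
        have t2 : ((Inc x).erase s(z,x)).card ≤ 1 := by
          rw [Finset.card_erase_of_mem hmem.2]
          have h5 := hIncB x
          omega
        have hxNz : x ∈ H.neighborFinset z := (mem_neighborFinset H z x).mpr hzx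
        have hvNzx : v ∈ (H.neighborFinset z).erase x :=
          Finset.mem_erase.mpr ⟨hxv.symm, (mem_neighborFinset H z v).mpr hvz.symm⟩
        have t3 : ∑ x' ∈ (H.neighborFinset z).erase x, (Inc x' \ Inc z).card ≤ 3 := by
          rw [← Finset.sum_erase_add _ _ hvNzx]
          have hv0 : (Inc v \ Inc z).card = 0 := by
            rw [hIncv]; simp
          have hbound : ∀ x' ∈ ((H.neighborFinset z).erase x).erase v,
              (Inc x' \ Inc z).card ≤ 1 := by
            intro x' hx'
            rcases Finset.mem_erase.mp hx' with ⟨hx'v, hx'2⟩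
            rcases Finset.mem_erase.mp hx'2 with ⟨hx'x, hx'N⟩
            have hadj : H.Adj z x' := (mem_neighborFinset H z x').mp hx'N
            have hd : H.degree x' ≤ 2 := by have := hore z x' hadj; omega
            have := hdiff x' z hadj.symm hx'v hzv
            omega
          have hcards : (((H.neighborFinset z).erase x).erase v).card = 3 := by
            rw [Finset.card_erase_of_mem hvNzx, Finset.card_erase_of_mem hxNz]
            have : (H.neighborFinset z).card = 5 := hdz
            omega
          have hs := Finset.sum_le_card_nsmul _ _ 1 hbound
          rw [hcards] at hs
          simp only [smul_eq_mul, mul_one] at hs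
          omega
        have t4 : ∑ x' ∈ (H.neighborFinset x).erase z, (Inc x' \ Inc x).card ≤ 4 := by
          have hbound : ∀ x' ∈ (H.neighborFinset x).erase z, (Inc x' \ Inc x).card ≤ 4 := by
            intro x' hx'
            rcases Finset.mem_erase.mp hx' with ⟨hx'z, hx'N⟩
            have hadj : H.Adj x x' := (mem_neighborFinset H x x').mp hx'N
            have hx'v : x' ≠ v := by
              rintro rfl
              exact hnvx hadj.symm
            have hdx2 : 2 ≤ H.degree x := by
              have hsub2 : ({z, x'} : Finset V) ⊆ H.neighborFinset x := by
                intro t ht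
                rcases Finset.mem_insert.mp ht with h | h
                · rw [h]; exact (mem_neighborFinset H x z).mpr hzx.symm
                · rw [Finset.mem_singleton] at h; rw [h]
                  exact (mem_neighborFinset H x x').mpr hadj
              have := Finset.card_le_card hsub2
              rwa [Finset.card_pair (Ne.symm hx'z)] at this
            have hd : H.degree x' ≤ 5 := by have := hore x x' hadj; omega
            have := hdiff x' x hadj.symm hx'v hxv
            omega
          have hcards : ((H.neighborFinset x).erase z).card ≤ 1 := by
            rw [Finset.card_erase_of_mem ((mem_neighborFinset H x z).mpr hzx.symm)]
            have hbr : (H.neighborFinset x).card = H.degree x := rfl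
            omega
          have hs := Finset.sum_le_card_nsmul _ _ 4 hbound
          have : ((H.neighborFinset x).erase z).card * 4 ≤ 4 := by omega
          simp only [smul_eq_mul] at hs
          omega
        have := hcard4 z x hzx
        omega
      -- recoloring preserves goodness
      have hrecolor : ∀ (g' : Sym2 V → Fin 13) (e0 : Sym2 V) (c' : Fin 13),
          (∀ e ∈ H'.edgeSet, ∀ e' ∈ H'.edgeSet, EdgeSees H e e' → g' e ≠ g' e') →
          (∀ e ∈ H'.edgeSet, EdgeSees H e0 e → g' e ≠ c') →
          ∀ e ∈ H'.edgeSet, ∀ e' ∈ H'.edgeSet, EdgeSees H e e' →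
            (if e = e0 then c' else g' e) ≠ (if e' = e0 then c' else g' e') := by
        intro g' e0 c' hgood hc' e he e' he' hsee
        by_cases h1 : e = e0
        · rw [if_pos h1]
          by_cases h2 : e' = e0
          · exact absurd (h1.trans h2.symm) hsee.1
          · rw [if_neg h2]
            exact (hc' e' he' (h1 ▸ hsee)).symm
        · rw [if_neg h1]
          by_cases h2 : e' = e0
          · rw [if_pos h2]
            exact hc' e he (edgeSees_symm (h2 ▸ hsee))
          · rw [if_neg h2]
            exact hgood e he e' he' hsee
      -- pick the recoloring edge e0 = s(u,x1)
      have hXcard : ((H.neighborFinset u).erase v).card = 4 := by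
        rw [Finset.card_erase_of_mem ((mem_neighborFinset H u v).mpr hvu.symm)]
        have hbr : (H.neighborFinset u).card = H.degree u := rfl
        omega
      obtain ⟨x1, hx1⟩ : ∃ x1, x1 ∈ (H.neighborFinset u).erase v := by
        have : 0 < ((H.neighborFinset u).erase v).card := by omega
        obtain ⟨x1, h⟩ := Finset.card_pos.mp this
        exact ⟨x1, h⟩
      rcases Finset.mem_erase.mp hx1 with ⟨hx1v, hx1N⟩
      have hux1 : H.Adj u x1 := (mem_neighborFinset H u x1).mp hx1N
      have hx1u : x1 ≠ u := hux1.ne'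
      have hnvx1 : ¬ H.Adj v x1 := by
        intro h
        rcases (hadjv x1).mp h with rfl | rfl
        · exact hx1u rfl
        · exact hnuw hux1
      have hx1w : x1 ≠ w := by
        rintro rfl
        exact hnuw hux1
      have hDu5'' : H.degree u = 5 := by rw [← hDudef]; exact hDu5'
      have he0card : (SF s(u,x1)).card ≤ 11 := hcount11 u x1 hvu hDu5'' hux1 hx1v hnvx1
      have he0mem : s(u,x1) ∈ H'.edgeSet := ((hIncmem u _).mp (hmemInc u x1 hux1 huv hx1v).1).1
      have he0A : s(u,x1) ∈ SF s(v,u) := by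
        refine (hSFmem _ _).mpr ⟨he0mem, ?_, u, ?_, u, ?_, Or.inl rfl⟩
        · intro h
          have : v ∈ s(u,x1) := h ▸ (by simp : v ∈ s(v,u))
          rcases Sym2.mem_iff.mp this with rfl | rfl
          · exact huv rfl
          · exact hx1v rfl
        · simp
        · simp
      have he0B : s(u,x1) ∈ SF s(v,w) := by
        refine (hSFmem _ _).mpr ⟨he0mem, ?_, v, ?_, u, ?_, Or.inr hvu⟩
        · intro h
          have : v ∈ s(u,x1) := h ▸ (by simp : v ∈ s(v,w))
          rcases Sym2.mem_iff.mp this with rfl | rfl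
          · exact huv rfl
          · exact hx1v rfl
        · simp
        · simp
      by_cases hDw4' : Dw = 4
      · -- Dw = 4
        rw [hDw4'] at hB1 hB2
        norm_num at hB1 hB2
        by_cases himg : ((SF s(v,w)).image g).card ≤ 12
        · obtain ⟨c2, hc2⟩ := hpick ((SF s(v,w)).image g) (by omega)
          obtain ⟨c1, hc1⟩ := hpick ((SF s(v,u)).image g ∪ {c2}) (by
            have h3 : ((SF s(v,u)).image g).card ≤ 11 := le_trans Finset.card_image_le (by omega)
            have h5 := Finset.card_union_le ((SF s(v,u)).image g) ({c2} : Finset (Fin 13))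
            have h4 : ({c2} : Finset (Fin 13)).card = 1 := Finset.card_singleton _
            omega)
          rw [Finset.mem_union] at hc1
          push_neg at hc1
          refine hextend g hg c1 c2 ?_ (havoid g _ c1 hc1.1) (havoid g _ c2 hc2)
          intro h; exact hc1.2 (by simp [h])
        · -- stuck : all 13 colors appear around s(v,w), with multiplicity one
          have himg13 : ((SF s(v,w)).image g).card = 13 := by
            have h1 : ((SF s(v,w)).image g).card ≤ 13 := by
              have := Finset.card_le_card ((SF s(v,w)).image g).subset_univ
              simpa using this
            omega
          have hSB13 : (SF s(v,w)).card = 13 := by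
            have := Finset.card_image_le (f := g) (s := SF s(v,w))
            omega
          have hinjB : ∀ e ∈ SF s(v,w), ∀ e' ∈ SF s(v,w), e ≠ e' → g e ≠ g e' := by
            have : Set.InjOn g (SF s(v,w)) := by
              rw [← Finset.card_image_iff]
              omega
            intro e he e' he' hne heq
            exact hne (this (by simpa using he) (by simpa using he') heq)
          -- recolor e0 with a fresh color
          obtain ⟨c', hc'⟩ := hpick ((SF s(u,x1)).image g ∪ {g s(u,x1)}) (by
            have h3 : ((SF s(u,x1)).image g).card ≤ 11 := le_trans Finset.card_image_le he0card
            have h5 := Finset.card_union_le ((SF s(u,x1)).image g) ({g s(u,x1)} : Finset (Fin 13))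
            have h4 : ({g s(u,x1)} : Finset (Fin 13)).card = 1 := Finset.card_singleton _
            omega)
          rw [Finset.mem_union] at hc'
          push_neg at hc'
          set g1 : Sym2 V → Fin 13 := fun e => if e = s(u,x1) then c' else g e with hg1def
          have hgood1 : ∀ e ∈ H'.edgeSet, ∀ e' ∈ H'.edgeSet, EdgeSees H e e' → g1 e ≠ g1 e' :=
            hrecolor g (s(u,x1)) c' hg (havoid g _ c' hc'.1)
          have hc'ne : c' ≠ g s(u,x1) := by
            intro h; exact hc'.2 (by simp [h])
          -- extend : color s(v,w) with the old color of e0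
          obtain ⟨c1, hc1⟩ := hpick ((SF s(v,u)).image g1 ∪ {g s(u,x1)}) (by
            have h3 : ((SF s(v,u)).image g1).card ≤ 11 := le_trans Finset.card_image_le (by omega)
            have h5 := Finset.card_union_le ((SF s(v,u)).image g1) ({g s(u,x1)} : Finset (Fin 13))
            have h4 : ({g s(u,x1)} : Finset (Fin 13)).card = 1 := Finset.card_singleton _
            omega)
          rw [Finset.mem_union] at hc1
          push_neg at hc1
          refine hextend g1 hgood1 c1 (g s(u,x1)) ?_ (havoid g1 _ c1 hc1.1) ?_
          · intro h; exact hc1.2 (by simp [h])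
          · intro e he hsee
            have heB : e ∈ SF s(v,w) := (hSFmem _ _).mpr ⟨he, hsee⟩
            by_cases h1 : e = s(u,x1)
            · rw [hg1def]; simp only [if_pos h1]
              exact hc'ne
            · rw [hg1def]; simp only [if_neg h1]
              exact hinjB e heB (s(u,x1)) he0B h1
      · -- Dw = 5
        have hDw5' : Dw = 5 := by omega
        rw [hDw5'] at hB1 hB2
        norm_num at hB1 hB2
        have hDw5'' : H.degree w = 5 := by rw [← hDwdef]; exact hDw5'
        by_cases hgreedy : ∃ c1 c2 : Fin 13, c1 ≠ c2 ∧ c1 ∉ (SF s(v,u)).image g ∧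
            c2 ∉ (SF s(v,w)).image g
        · obtain ⟨c1, c2, h12, hA, hB⟩ := hgreedy
          exact hextend g hg c1 c2 h12 (havoid g _ c1 hA) (havoid g _ c2 hB)
        · push_neg at hgreedy
          obtain ⟨a0, ha0⟩ := hpick ((SF s(v,u)).image g)
            (lt_of_le_of_lt (le_trans Finset.card_image_le hB1) (by norm_num))
          obtain ⟨b0, hb0⟩ := hpick ((SF s(v,w)).image g)
            (lt_of_le_of_lt (le_trans Finset.card_image_le hB2) (by norm_num))
          have hab0 : a0 = b0 := by
            by_contra hab
            exact hb0 (hgreedy a0 b0 hab ha0)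
          have hcB : a0 ∉ (SF s(v,w)).image g := hab0 ▸ hb0
          have hAc : ∀ c', c' ∉ (SF s(v,u)).image g → c' = a0 := by
            intro c' h
            by_contra hne
            exact hb0 (hgreedy c' b0 (fun hh => hne (hh.trans hab0.symm)) h)
          have hBc : ∀ c', c' ∉ (SF s(v,w)).image g → c' = a0 := by
            intro c' h
            by_contra hne
            exact h (hgreedy a0 c' (fun hh => hne hh.symm) ha0)
          have herase12 : (Finset.univ.erase a0 : Finset (Fin 13)).card = 12 := by
            rw [Finset.card_erase_of_mem (Finset.mem_univ a0)]
            simp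
          have hcardA : 12 ≤ ((SF s(v,u)).image g).card := by
            have hss : Finset.univ.erase a0 ⊆ (SF s(v,u)).image g := by
              intro c' hc'
              rcases Finset.mem_erase.mp hc' with ⟨hne, -⟩
              by_contra h
              exact hne (hAc c' h)
            have := Finset.card_le_card hss
            omega
          have hcardB : 12 ≤ ((SF s(v,w)).image g).card := by
            have hss : Finset.univ.erase a0 ⊆ (SF s(v,w)).image g := by
              intro c' hc'
              rcases Finset.mem_erase.mp hc' with ⟨hne, -⟩
              by_contra h
              exact hne (hBc c' h)
            have := Finset.card_le_card hss
            omega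
          have hSA12 : (SF s(v,u)).card = 12 := by
            have := Finset.card_image_le (f := g) (s := SF s(v,u))
            omega
          have hSB12 : (SF s(v,w)).card = 12 := by
            have := Finset.card_image_le (f := g) (s := SF s(v,w))
            omega
          have hinjA : ∀ e ∈ SF s(v,u), ∀ e' ∈ SF s(v,u), e ≠ e' → g e ≠ g e' := by
            have hinj : Set.InjOn g (SF s(v,u)) := by
              rw [← Finset.card_image_iff]
              have := Finset.card_image_le (f := g) (s := SF s(v,u))
              omega
            intro e he e' he' hne heq
            exact hne (hinj (by simpa using he) (by simpa using he') heq)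
          have hinjB : ∀ e ∈ SF s(v,w), ∀ e' ∈ SF s(v,w), e ≠ e' → g e ≠ g e' := by
            have hinj : Set.InjOn g (SF s(v,w)) := by
              rw [← Finset.card_image_iff]
              have := Finset.card_image_le (f := g) (s := SF s(v,w))
              omega
            intro e he e' he' hne heq
            exact hne (hinj (by simpa using he) (by simpa using he') heq)
          -- no cross adjacency between {u,w} and the other side's private neighbors
          have hclaim : ∀ p q, H.Adj v p → H.Adj v q → p ≠ q → H.degree p = 5 →
              H.degree q = 5 → (H.neighborFinset v).erase q = {p} →
              (SF s(v,q)).card = 12 →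
              ∀ y ∈ (H.neighborFinset q).erase v, ¬ H.Adj p y := by
            intro p q hvp hvq hpq hdp hdq hNq hSq y hy hpy
            have hpv : p ≠ v := hvp.ne'
            have hqv : q ≠ v := hvq.ne'
            rcases Finset.mem_erase.mp hy with ⟨hyv, hyN⟩
            have hqy : H.Adj q y := (mem_neighborFinset H q y).mp hyN
            have hyq : y ≠ q := hqy.ne'
            have hyp : y ≠ p := by
              intro h
              have h9 := hore q y hqy
              rw [h, hdq, hdp] at h9
              omega
            have hdy : H.degree y ≤ 2 := by have := hore q y hqy; omega
            have hnp : ¬ H.Adj p q := by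
              intro h
              have := hore p q h
              rw [hdp, hdq] at this
              omega
            have hyInc : Inc y = {s(y,q), s(y,p)} := by
              have hsub3 : ({s(y,q), s(y,p)} : Finset (Sym2 V)) ⊆ Inc y := by
                intro t ht
                rcases Finset.mem_insert.mp ht with h | h
                · rw [h]; exact (hmemInc y q hqy.symm hyv hqv).1
                · rw [Finset.mem_singleton] at h; rw [h]
                  exact (hmemInc y p hpy.symm hyv hpv).1
              refine (Finset.eq_of_subset_of_card_le hsub3 ?_).symm
              have hcpair : ({s(y,q), s(y,p)} : Finset (Sym2 V)).card = 2 := by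
                rw [Finset.card_pair]
                intro h
                rcases Sym2.eq_iff.mp h with ⟨-, h2⟩ | ⟨-, h2⟩
                · exact hpq h2.symm
                · exact hyq h2.symm
              have := hIncB y
              omega
            have hterm0 : ((Inc y \ Inc q) \ Inc p).card = 0 := by
              rw [Finset.card_eq_zero, Finset.eq_empty_iff_forall_notMem]
              intro t ht
              rcases Finset.mem_sdiff.mp ht with ⟨ht1, htp⟩
              rcases Finset.mem_sdiff.mp ht1 with ⟨hty, htq⟩
              rw [hyInc] at hty
              rcases Finset.mem_insert.mp hty with h | h
              · exact htq (h ▸ (hmemInc y q hqy.symm hyv hqv).2)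
              · rw [Finset.mem_singleton] at h
                exact htp (h ▸ (hmemInc y p hpy.symm hyv hpv).2)
            -- refined subset bound for SF s(v,q)
            have hsub2 : SF s(v,q) ⊆
                ((Inc v).erase s(v,q)) ∪ ((Inc q).erase s(v,q))
                ∪ ((H.neighborFinset v).erase q).biUnion (fun x => Inc x \ Inc v)
                ∪ ((H.neighborFinset q).erase v).biUnion
                    (fun x => (Inc x \ Inc q) \ Inc p) := by
              intro e he
              have h4 := hsub v q hvq he
              simp only [Finset.mem_union] at h4 ⊢
              rcases h4 with ((h|h)|h)|h
              · exact Or.inl (Or.inl (Or.inl h))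
              · exact Or.inl (Or.inl (Or.inr h))
              · exact Or.inl (Or.inr h)
              · obtain ⟨x', hx', he'⟩ := Finset.mem_biUnion.mp h
                by_cases hp : e ∈ Inc p
                · refine Or.inl (Or.inr (Finset.mem_biUnion.mpr ⟨p, ?_, ?_⟩))
                  · rw [hNq]; simp
                  · rw [Finset.mem_sdiff, hIncv]
                    exact ⟨hp, by simp⟩
                · exact Or.inr (Finset.mem_biUnion.mpr
                    ⟨x', hx', Finset.mem_sdiff.mpr ⟨he', hp⟩⟩)
            have hc1' : ((Inc v).erase s(v,q)).card = 0 := by rw [hIncv]; simp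
            have hc2' : ((Inc q).erase s(v,q)).card ≤ 4 := by
              have h5 := hIncA q hvq
              have := Finset.card_le_card (Finset.erase_subset (s(v,q)) (Inc q))
              rw [hdq] at h5
              omega
            have hc3' : (((H.neighborFinset v).erase q).biUnion
                (fun x => Inc x \ Inc v)).card ≤ 4 := by
              rw [hNq]
              refine le_trans Finset.card_biUnion_le ?_
              rw [Finset.sum_singleton]
              have h5 := hIncA p hvp
              have := Finset.card_le_card (Finset.sdiff_subset (s := Inc p) (t := Inc v))
              rw [hdp] at h5
              omega
            have hc4' : (((H.neighborFinset q).erase v).biUnion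
                (fun x => (Inc x \ Inc q) \ Inc p)).card ≤ 3 := by
              refine le_trans Finset.card_biUnion_le ?_
              rw [← Finset.sum_erase_add _ _ hy, hterm0, add_zero]
              have hbound : ∀ x' ∈ ((H.neighborFinset q).erase v).erase y,
                  ((Inc x' \ Inc q) \ Inc p).card ≤ 1 := by
                intro x' hx'
                rcases Finset.mem_erase.mp hx' with ⟨hx'y, hx'2⟩
                rcases Finset.mem_erase.mp hx'2 with ⟨hx'v, hx'N⟩
                have hadj : H.Adj q x' := (mem_neighborFinset H q x').mp hx'N
                have hd : H.degree x' ≤ 2 := by have := hore q x' hadj; omega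
                have h6 := hdiff x' q hadj.symm hx'v hqv
                have := Finset.card_le_card
                  (Finset.sdiff_subset (s := Inc x' \ Inc q) (t := Inc p))
                omega
              have hcards : (((H.neighborFinset q).erase v).erase y).card = 3 := by
                rw [Finset.card_erase_of_mem hy,
                  Finset.card_erase_of_mem ((mem_neighborFinset H q v).mpr hvq.symm)]
                have hbr : (H.neighborFinset q).card = H.degree q := rfl
                omega
              have hs := Finset.sum_le_card_nsmul _ _ 1 hbound
              rw [hcards] at hs
              simpa using hs
            have hfin : (SF s(v,q)).card ≤ 11 := by
              refine le_trans (Finset.card_le_card hsub2) ?_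
              refine le_trans (Finset.card_union_le _ _) ?_
              have h7 : (((Inc v).erase s(v,q)) ∪ ((Inc q).erase s(v,q))
                  ∪ ((H.neighborFinset v).erase q).biUnion (fun x => Inc x \ Inc v)).card
                  ≤ 8 := by
                refine le_trans (Finset.card_union_le _ _) ?_
                have h8 := Finset.card_union_le ((Inc v).erase s(v,q)) ((Inc q).erase s(v,q))
                omega
              omega
            omega
          have hclaimB : ∀ y ∈ (H.neighborFinset w).erase v, ¬ H.Adj u y :=
            hclaim u w hvu hvw huw hDu5'' hDw5'' hNvw hSB12
          have hclaimA : ∀ x ∈ (H.neighborFinset u).erase v, ¬ H.Adj w x :=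
            hclaim w u hvw hvu (Ne.symm huw) hDw5'' hDu5'' hNvu hSA12
          -- choose y1 not seen from e0
          have hdx1 : H.degree x1 ≤ 2 := by have := hore u x1 hux1; rw [hDu5''] at this; omega
          have hYcard : ((H.neighborFinset w).erase v).card = 4 := by
            rw [Finset.card_erase_of_mem ((mem_neighborFinset H w v).mpr hvw.symm)]
            have hbr : (H.neighborFinset w).card = H.degree w := rfl
            omega
          obtain ⟨y1, hy1⟩ : ∃ y1, y1 ∈ ((H.neighborFinset w).erase v) \
              (insert x1 (H.neighborFinset x1)) := by
            refine Finset.card_pos.mp ?_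
            have h8 := Finset.le_card_sdiff (insert x1 (H.neighborFinset x1))
              ((H.neighborFinset w).erase v)
            have h9 : (insert x1 (H.neighborFinset x1)).card ≤ 3 := by
              refine le_trans (Finset.card_insert_le _ _) ?_
              have hbr : (H.neighborFinset x1).card = H.degree x1 := rfl
              omega
            omega
          rcases Finset.mem_sdiff.mp hy1 with ⟨hy1W, hy1R⟩
          rcases Finset.mem_erase.mp hy1W with ⟨hy1v, hy1N⟩
          have hwy1 : H.Adj w y1 := (mem_neighborFinset H w y1).mp hy1N
          have hy1w : y1 ≠ w := hwy1.ne'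
          have hy1x1 : y1 ≠ x1 := by
            intro h
            exact hy1R (by rw [h]; exact Finset.mem_insert_self _ _)
          have hnx1y1 : ¬ H.Adj x1 y1 := by
            intro h
            exact hy1R (Finset.mem_insert_of_mem ((mem_neighborFinset H x1 y1).mpr h))
          have hnuy1 : ¬ H.Adj u y1 := hclaimB y1 hy1W
          have hnwx1 : ¬ H.Adj w x1 := hclaimA x1 hx1
          have hy1u : y1 ≠ u := by
            rintro rfl
            exact hnuw hwy1.symm
          have hnvy1 : ¬ H.Adj v y1 := by
            intro h
            rcases (hadjv y1).mp h with rfl | rfl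
            · exact hy1u rfl
            · exact hy1w rfl
          have he1card : (SF s(w,y1)).card ≤ 11 := hcount11 w y1 hvw hDw5'' hwy1 hy1v hnvy1
          have he1mem : s(w,y1) ∈ H'.edgeSet := ((hIncmem w _).mp (hmemInc w y1 hwy1 hwv hy1v).1).1
          have he1B : s(w,y1) ∈ SF s(v,w) := by
            refine (hSFmem _ _).mpr ⟨he1mem, ?_, w, ?_, w, ?_, Or.inl rfl⟩
            · intro h
              have : v ∈ s(w,y1) := h ▸ (by simp : v ∈ s(v,w))
              rcases Sym2.mem_iff.mp this with rfl | rfl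
              · exact hwv rfl
              · exact hy1v rfl
            · simp
            · simp
          have he1A : s(w,y1) ∈ SF s(v,u) := by
            refine (hSFmem _ _).mpr ⟨he1mem, ?_, v, ?_, w, ?_, Or.inr hvw⟩
            · intro h
              have : v ∈ s(w,y1) := h ▸ (by simp : v ∈ s(v,u))
              rcases Sym2.mem_iff.mp this with rfl | rfl
              · exact hwv rfl
              · exact hy1v rfl
            · simp
            · simp
          have hne01 : s(u,x1) ≠ s(w,y1) := by
            intro h
            rcases Sym2.eq_iff.mp h with ⟨h1, -⟩ | ⟨h1, -⟩
            · exact huw h1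
            · exact hy1u h1.symm
          have hnosee : ¬ EdgeSees H s(u,x1) s(w,y1) := by
            rintro ⟨-, p, hp, q, hq, hpq⟩
            rcases Sym2.mem_iff.mp hp with rfl | rfl <;>
              rcases Sym2.mem_iff.mp hq with rfl | rfl
            · rcases hpq with h | h
              · exact huw h
              · exact hnuw h
            · rcases hpq with h | h
              · exact hy1u h.symm
              · exact hnuy1 h
            · rcases hpq with h | h
              · exact hx1w h
              · exact hnwx1 h.symm
            · rcases hpq with h | h
              · exact hy1x1 h.symm
              · exact hnx1y1 h
          have hge0A : g s(u,x1) ∈ (SF s(v,u)).image g :=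
            Finset.mem_image.mpr ⟨_, he0A, rfl⟩
          have hge1B : g s(w,y1) ∈ (SF s(v,w)).image g :=
            Finset.mem_image.mpr ⟨_, he1B, rfl⟩
          by_cases hopt0 : ∃ c', c' ∉ (SF s(u,x1)).image g ∪ {g s(u,x1)} ∧ c' ≠ a0
          · obtain ⟨c', hc', hc'c⟩ := hopt0
            rw [Finset.mem_union] at hc'
            push_neg at hc'
            have hc'e0 : c' ≠ g s(u,x1) := fun h => hc'.2 (by simp [h])
            refine hextend (fun e => if e = s(u,x1) then c' else g e)
              (hrecolor g (s(u,x1)) c' hg (havoid g _ c' hc'.1)) (g s(u,x1)) a0 ?_ ?_ ?_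
            · intro h
              exact ha0 (h ▸ hge0A)
            · intro e he hsee
              show (if e = s(u,x1) then c' else g e) ≠ g s(u,x1)
              by_cases h1 : e = s(u,x1)
              · rw [if_pos h1]; exact hc'e0
              · rw [if_neg h1]
                exact hinjA e ((hSFmem _ _).mpr ⟨he, hsee⟩) (s(u,x1)) he0A h1
            · intro e he hsee
              show (if e = s(u,x1) then c' else g e) ≠ a0
              by_cases h1 : e = s(u,x1)
              · rw [if_pos h1]; exact hc'c
              · rw [if_neg h1]
                intro h
                exact hcB (h ▸ Finset.mem_image.mpr ⟨e, (hSFmem _ _).mpr ⟨he, hsee⟩, rfl⟩)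
          · by_cases hopt1 : ∃ c', c' ∉ (SF s(w,y1)).image g ∪ {g s(w,y1)} ∧ c' ≠ a0
            · obtain ⟨c', hc', hc'c⟩ := hopt1
              rw [Finset.mem_union] at hc'
              push_neg at hc'
              have hc'e1 : c' ≠ g s(w,y1) := fun h => hc'.2 (by simp [h])
              refine hextend (fun e => if e = s(w,y1) then c' else g e)
                (hrecolor g (s(w,y1)) c' hg (havoid g _ c' hc'.1)) a0 (g s(w,y1)) ?_ ?_ ?_
              · intro h
                exact hb0 (hab0 ▸ (h.symm ▸ hge1B))
              · intro e he hsee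
                show (if e = s(w,y1) then c' else g e) ≠ a0
                by_cases h1 : e = s(w,y1)
                · rw [if_pos h1]; exact hc'c
                · rw [if_neg h1]
                  intro h
                  exact ha0 (h ▸ Finset.mem_image.mpr ⟨e, (hSFmem _ _).mpr ⟨he, hsee⟩, rfl⟩)
              · intro e he hsee
                show (if e = s(w,y1) then c' else g e) ≠ g s(w,y1)
                by_cases h1 : e = s(w,y1)
                · rw [if_pos h1]; exact hc'e1
                · rw [if_neg h1]
                  exact hinjB e ((hSFmem _ _).mpr ⟨he, hsee⟩) (s(w,y1)) he1B h1
            · -- both recolorings are forced to the color a0 : recolor both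
              push_neg at hopt0 hopt1
              have hU0 : a0 ∉ (SF s(u,x1)).image g ∪ {g s(u,x1)} := by
                obtain ⟨cc, hcc⟩ := hpick ((SF s(u,x1)).image g ∪ {g s(u,x1)}) (by
                  have h3 : ((SF s(u,x1)).image g).card ≤ 11 :=
                    le_trans Finset.card_image_le he0card
                  have h5 := Finset.card_union_le ((SF s(u,x1)).image g)
                    ({g s(u,x1)} : Finset (Fin 13))
                  have h4 : ({g s(u,x1)} : Finset (Fin 13)).card = 1 := Finset.card_singleton _
                  omega)
                have := hopt0 cc hcc
                exact this ▸ hcc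
              have hU1 : a0 ∉ (SF s(w,y1)).image g ∪ {g s(w,y1)} := by
                obtain ⟨cc, hcc⟩ := hpick ((SF s(w,y1)).image g ∪ {g s(w,y1)}) (by
                  have h3 : ((SF s(w,y1)).image g).card ≤ 11 :=
                    le_trans Finset.card_image_le he1card
                  have h5 := Finset.card_union_le ((SF s(w,y1)).image g)
                    ({g s(w,y1)} : Finset (Fin 13))
                  have h4 : ({g s(w,y1)} : Finset (Fin 13)).card = 1 := Finset.card_singleton _
                  omega)
                have := hopt1 cc hcc
                exact this ▸ hcc
              rw [Finset.mem_union] at hU0 hU1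
              push_neg at hU0 hU1
              have hgood1 := hrecolor g (s(u,x1)) a0 hg (havoid g _ a0 hU0.1)
              have hgood2 := hrecolor (fun e => if e = s(u,x1) then a0 else g e)
                (s(w,y1)) a0 hgood1 (by
                  intro e he hsee
                  show (if e = s(u,x1) then a0 else g e) ≠ a0
                  by_cases h1 : e = s(u,x1)
                  · exfalso
                    exact hnosee (edgeSees_symm (h1 ▸ hsee))
                  · rw [if_neg h1]
                    exact havoid g _ a0 hU1.1 e he hsee)
              have hne12 : g s(u,x1) ≠ g s(w,y1) := hinjB _ he0B _ he1B hne01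
              refine hextend
                (fun e => if e = s(w,y1) then a0 else if e = s(u,x1) then a0 else g e)
                hgood2 (g s(u,x1)) (g s(w,y1)) hne12 ?_ ?_
              · intro e he hsee
                show (if e = s(w,y1) then a0 else if e = s(u,x1) then a0 else g e)
                    ≠ g s(u,x1)
                by_cases h1 : e = s(w,y1)
                · rw [if_pos h1]
                  intro h
                  exact ha0 (h ▸ hge0A)
                · rw [if_neg h1]
                  by_cases h2 : e = s(u,x1)
                  · rw [if_pos h2]
                    intro h
                    exact ha0 (h ▸ hge0A)
                  · rw [if_neg h2]
                    exact hinjA e ((hSFmem _ _).mpr ⟨he, hsee⟩) (s(u,x1)) he0A h2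
              · intro e he hsee
                show (if e = s(w,y1) then a0 else if e = s(u,x1) then a0 else g e)
                    ≠ g s(w,y1)
                by_cases h1 : e = s(w,y1)
                · rw [if_pos h1]
                  intro h
                  exact hcB (h ▸ hge1B)
                · rw [if_neg h1]
                  by_cases h2 : e = s(u,x1)
                  · rw [if_pos h2]
                    intro h
                    exact hcB (h ▸ hge1B)
                  · rw [if_neg h2]
                    exact hinjB e ((hSFmem _ _).mpr ⟨he, hsee⟩) (s(w,y1)) he1B h1
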